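/- arXiv:1706.03111 — 2 statements merged into one kernel-verified Lean document; each statement's English description precedes it below -/
import Mathlib

section
/- Bartlett–Moyal formula (diagonal case): for every ε > 0 and n ∈ ℕ, the Wigner transform of the nth semiclassical Hermite function is W^ε[v_nᵋ](x,p) = ((−1)ⁿ/(πε)) · e^{−(x² + p²)/ε} · L_n(2(x² + p²)/ε) for all (x,p) ∈ ℝ², where L_n is the nth Laguerre polynomial. -/
open MeasureTheory

/-- The semiclassical cross-Wigner transform
`W^ε_g[f](x,p) = (2πε)⁻¹ ∫ e^{−ipy/ε} f(x+y/2) conj(g(x−y/2)) dy`. -/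
noncomputable def crossWigner (ε : ℝ) (f g : ℝ → ℂ) (x p : ℝ) : ℂ :=
  ((2 * Real.pi * ε : ℝ) : ℂ)⁻¹ *
    ∫ y : ℝ, Complex.exp (-Complex.I * (p : ℂ) * (y : ℂ) / (ε : ℂ)) *
      f (x + y / 2) * (starRingEnd ℂ) (g (x - y / 2))

/-- The nth physicists' Hermite polynomial (as a function). -/
noncomputable def hermitePoly (n : ℕ) (x : ℝ) : ℝ :=
  (-1 : ℝ) ^ n * Real.exp (x ^ 2) * iteratedDeriv n (fun t : ℝ => Real.exp (-t ^ 2)) x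

/-- The semiclassical Hermite function `v_nᵋ`. -/
noncomputable def hermiteFun (ε : ℝ) (n : ℕ) (x : ℝ) : ℝ :=
  (Real.pi * ε) ^ (-(1 / 4 : ℝ)) * ((2 : ℝ) ^ n * (n.factorial : ℝ)) ^ (-(1 / 2 : ℝ)) *
    Real.exp (-x ^ 2 / (2 * ε)) * hermitePoly n (x / Real.sqrt ε)

/-- The Laguerre polynomial of degree `n` and order `a`:
`L_n^{(a)}(x) = Σ_{m=0}^{n} binom(n+a, n−m) (−x)^m / m!`. -/
noncomputable def laguerre (n a : ℕ) (x : ℝ) : ℝ :=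
  ∑ m ∈ Finset.range (n + 1), ((n + a).choose (n - m) : ℝ) * (-x) ^ m / (m.factorial : ℝ)

open Polynomial Finset Filter
open scoped Topology

noncomputable def HP : ℕ → Polynomial ℝ
  | 0 => 1
  | n+1 => 2 * X * HP n - derivative (HP n)

lemma iteratedDeriv_gauss (n : ℕ) :
    iteratedDeriv n (fun t : ℝ => Real.exp (-t^2))
      = fun x => (-1:ℝ)^n * Real.exp (-x^2) * (HP n).eval x := by
  induction n with
  | zero => simp [HP]
  | succ n ih =>
      rw [iteratedDeriv_succ, ih]
      funext x
      have h1 : HasDerivAt (fun x : ℝ => (-1:ℝ)^n * Real.exp (-x^2) * (HP n).eval x)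
          ((-1:ℝ)^(n+1) * Real.exp (-x^2) * (HP (n+1)).eval x) x := by
        have he : HasDerivAt (fun x : ℝ => Real.exp (-x^2)) (Real.exp (-x^2) * (-2*x)) x := by
          have : HasDerivAt (fun x : ℝ => -x^2) (-2*x) x := by
            simpa using ((hasDerivAt_pow 2 x).fun_neg)
          simpa using this.exp
        have hp : HasDerivAt (fun x : ℝ => (HP n).eval x) ((HP n).derivative.eval x) x :=
          (HP n).hasDerivAt x
        have := ((he.const_mul ((-1:ℝ)^n)).fun_mul hp)
        refine this.congr_deriv ?_
        show _ = (-1:ℝ)^(n+1) * Real.exp (-x^2) * (HP (n+1)).eval x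
        rw [show HP (n+1) = 2 * X * HP n - derivative (HP n) from rfl]
        simp only [eval_sub, eval_mul, eval_ofNat, eval_X, pow_succ]
        ring
      exact h1.deriv

lemma hermitePoly_eq (n : ℕ) (x : ℝ) : hermitePoly n x = (HP n).eval x := by
  have h1 : (-1:ℝ)^n * (-1:ℝ)^n = 1 := by
    rw [← pow_add]
    exact Even.neg_one_pow ⟨n, rfl⟩
  have h2 : Real.exp (x^2) * Real.exp (-x^2) = 1 := by
    rw [← Real.exp_add]; simp
  rw [hermitePoly, iteratedDeriv_gauss]
  calc (-1:ℝ)^n * Real.exp (x^2) * ((-1:ℝ)^n * Real.exp (-x^2) * (HP n).eval x)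
      = ((-1:ℝ)^n * (-1:ℝ)^n) * (Real.exp (x^2) * Real.exp (-x^2)) * (HP n).eval x := by ring
    _ = (HP n).eval x := by rw [h1, h2]; ring

lemma HP_derivative (n : ℕ) : derivative (HP n) = 2 * (n : Polynomial ℝ) * HP (n-1) := by
  induction n with
  | zero => simp [HP]
  | succ n ih =>
      rw [show HP (n+1) = 2 * X * HP n - derivative (HP n) from rfl]
      cases n with
      | zero => simp [HP]
      | succ m =>
          rw [derivative_sub, derivative_mul, derivative_mul, ih, derivative_mul]
          simp only [Nat.add_sub_cancel]
          rw [show HP (m+1) = 2 * X * HP m - derivative (HP m) from rfl]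
          simp only [derivative_mul, derivative_ofNat, derivative_X, derivative_natCast, mul_zero, zero_mul, zero_add, add_zero]
          push_cast
          ring

lemma HP_succ (n : ℕ) : HP (n+1) = 2 * X * HP n - 2 * (n : Polynomial ℝ) * HP (n-1) := by
  rw [show HP (n+1) = 2 * X * HP n - derivative (HP n) from rfl, HP_derivative]


noncomputable def eB (b : ℝ) (u : ℝ) : ℂ := Complex.exp (-(u:ℂ)^2 - 2*Complex.I*b*u)

lemma norm_eB (b u : ℝ) : ‖eB b u‖ = Real.exp (-u^2) := by
  rw [eB, Complex.norm_exp]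
  congr 1
  simp [Complex.sub_re, Complex.mul_re, Complex.mul_im, ← Complex.ofReal_pow]

lemma continuous_eB (b : ℝ) : Continuous (eB b) := by
  apply Complex.continuous_exp.comp
  fun_prop

lemma integrable_pow_gauss (i : ℕ) : Integrable (fun u : ℝ => |u|^i * Real.exp (-u^2)) := by
  have h : Integrable (fun u : ℝ => u^i * Real.exp (-u^2)) := by
    have := integrable_rpow_mul_exp_neg_mul_sq (b := 1) one_pos (s := (i:ℝ)) (by have := Nat.cast_nonneg (α := ℝ) i; linarith)
    simpa [Real.rpow_natCast] using this
  refine h.abs.congr ?_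
  filter_upwards with u
  rw [abs_mul, _root_.abs_pow, _root_.abs_of_pos (Real.exp_pos _)]

lemma tendsto_pow_gauss_atTop (i : ℕ) :
    Tendsto (fun u : ℝ => |u|^i * Real.exp (-u^2)) atTop (𝓝 0) := by
  have h0 : Tendsto (fun x : ℝ => Real.exp (-(1/2) * x)) atTop (𝓝 0) := by
    have h1 : Tendsto (fun x : ℝ => (1/2 : ℝ) * x) atTop atTop :=
      Tendsto.const_mul_atTop (by norm_num) tendsto_id
    have h2 := Real.tendsto_exp_neg_atTop_nhds_zero.comp h1
    refine h2.congr fun x => ?_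
    simp [Function.comp, neg_mul]
  have h := (rpow_mul_exp_neg_mul_sq_isLittleO_exp_neg one_pos (i:ℝ)).trans_tendsto h0
  have h' : Tendsto (fun u : ℝ => u^i * Real.exp (-u^2)) atTop (𝓝 0) := by
    refine h.congr' ?_
    filter_upwards with u
    rw [Real.rpow_natCast]
    norm_num
  refine h'.congr' ?_
  filter_upwards [eventually_ge_atTop (0:ℝ)] with u hu
  rw [_root_.abs_of_nonneg hu]

lemma tendsto_pow_gauss_atBot (i : ℕ) :
    Tendsto (fun u : ℝ => |u|^i * Real.exp (-u^2)) atBot (𝓝 0) := by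
  have := (tendsto_pow_gauss_atTop i).comp tendsto_neg_atBot_atTop
  refine this.congr fun u => ?_
  simp [abs_neg, neg_sq]

lemma poly_abs_bound (R : Polynomial ℝ) (u : ℝ) :
    |R.eval u| ≤ ∑ i ∈ range (R.natDegree+1), |R.coeff i| * |u|^i := by
  rw [Polynomial.eval_eq_sum_range]
  refine (Finset.abs_sum_le_sum_abs _ _).trans ?_
  apply Finset.sum_le_sum
  intro i _
  rw [abs_mul, _root_.abs_pow]

lemma integrable_cexpPoly (b : ℝ) (R : Polynomial ℝ) :
    Integrable (fun u : ℝ => eB b u * ((R.eval u : ℝ) : ℂ)) := by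
  have hg : Integrable (fun u : ℝ =>
      ∑ i ∈ range (R.natDegree+1), |R.coeff i| * (|u|^i * Real.exp (-u^2))) := by
    apply integrable_finset_sum
    intro i _
    exact (integrable_pow_gauss i).const_mul _
  refine hg.mono' ?_ ?_
  · exact ((continuous_eB b).mul (Complex.continuous_ofReal.comp
      (Polynomial.continuous R ))).aestronglyMeasurable
  · filter_upwards with u
    rw [norm_mul, norm_eB, Complex.norm_real, Real.norm_eq_abs]
    calc Real.exp (-u^2) * |R.eval u|
        ≤ Real.exp (-u^2) * ∑ i ∈ range (R.natDegree+1), |R.coeff i| * |u|^i :=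
          mul_le_mul_of_nonneg_left (poly_abs_bound R u) (Real.exp_pos _).le
      _ = _ := by rw [Finset.mul_sum]; apply Finset.sum_congr rfl; intro i _; ring

lemma tendsto_cexpPoly (b : ℝ) (R : Polynomial ℝ) (l : Filter ℝ)
    (hl : ∀ i : ℕ, Tendsto (fun u : ℝ => |u|^i * Real.exp (-u^2)) l (𝓝 0)) :
    Tendsto (fun u : ℝ => eB b u * ((R.eval u : ℝ) : ℂ)) l (𝓝 0) := by
  rw [tendsto_zero_iff_norm_tendsto_zero]
  have hB : Tendsto (fun u : ℝ =>
      ∑ i ∈ range (R.natDegree+1), |R.coeff i| * (|u|^i * Real.exp (-u^2))) l (𝓝 0) := by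
    have := tendsto_finset_sum (range (R.natDegree+1))
      (fun i _ => ((hl i).const_mul (|R.coeff i|)))
    simpa using this
  refine squeeze_zero (fun u => norm_nonneg _) (fun u => ?_) hB
  rw [norm_mul, norm_eB, Complex.norm_real, Real.norm_eq_abs]
  calc Real.exp (-u^2) * |R.eval u|
      ≤ Real.exp (-u^2) * ∑ i ∈ range (R.natDegree+1), |R.coeff i| * |u|^i :=
        mul_le_mul_of_nonneg_left (poly_abs_bound R u) (Real.exp_pos _).le
    _ = _ := by rw [Finset.mul_sum]; apply Finset.sum_congr rfl; intro i _; ring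

-- Part 3
lemma hasDerivAt_eB (b u : ℝ) :
    HasDerivAt (eB b) ((-2*(u:ℂ) - 2*Complex.I*b) * eB b u) u := by
  have hF : HasDerivAt (fun z : ℂ => -z^2 - 2*Complex.I*b*z) (-2*(u:ℂ) - 2*Complex.I*b) (u:ℂ) := by
    have h1 := (hasDerivAt_pow 2 (u:ℂ)).fun_neg
    have h2 := (hasDerivAt_id (u:ℂ)).const_mul (2*Complex.I*(b:ℂ))
    have := h1.fun_sub h2
    refine this.congr_deriv ?_
    push_cast
    ring
  have h := (hF.comp_ofReal).cexp
  refine h.congr_deriv ?_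
  simp only [eB]
  ring

lemma hasDerivAt_polyAdd (P : Polynomial ℝ) (a u : ℝ) :
    HasDerivAt (fun u : ℝ => ((P.eval (a+u) : ℝ) : ℂ)) ((P.derivative.eval (a+u) : ℝ) : ℂ) u := by
  have hf : HasDerivAt (fun u : ℝ => a + u) 1 u := (hasDerivAt_id u).const_add a
  have := (P.hasDerivAt (a+u)).comp u hf
  have h2 : HasDerivAt (fun u : ℝ => P.eval (a+u)) (P.derivative.eval (a+u)) u := by
    exact this.congr_deriv (mul_one _)
  exact h2.ofReal_comp

lemma hasDerivAt_polySub (Q : Polynomial ℝ) (a u : ℝ) :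
    HasDerivAt (fun u : ℝ => ((Q.eval (a-u) : ℝ) : ℂ)) (-(Q.derivative.eval (a-u) : ℝ) : ℂ) u := by
  have hf : HasDerivAt (fun u : ℝ => a - u) (-1) u := by
    simpa using (hasDerivAt_id u).const_sub a
  have := (Q.hasDerivAt (a-u)).comp u hf
  have h2 : HasDerivAt (fun u : ℝ => Q.eval (a-u)) (-(Q.derivative.eval (a-u))) u := by
    refine this.congr_deriv ?_
    ring
  have h3 := h2.ofReal_comp
  push_cast at h3 ⊢
  exact h3

lemma integral_ibp_zero (b a : ℝ) (P Q : Polynomial ℝ) :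
    ∫ u : ℝ, eB b u * ((-2*(u:ℂ) - 2*Complex.I*b) * ((P.eval (a+u) : ℝ):ℂ) * ((Q.eval (a-u):ℝ):ℂ)
      + ((P.derivative.eval (a+u):ℝ):ℂ) * ((Q.eval (a-u):ℝ):ℂ)
      - ((P.eval (a+u):ℝ):ℂ) * ((Q.derivative.eval (a-u):ℝ):ℂ)) = 0 := by
  set T : Polynomial ℝ := (P.comp (C a + X)) * (Q.comp (C a - X)) with hT
  set S : Polynomial ℝ := Polynomial.C (-2) * X * T
      + (P.derivative.comp (C a + X)) * (Q.comp (C a - X))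
      - (P.comp (C a + X)) * (Q.derivative.comp (C a - X)) with hS
  have hpt : ∀ u : ℝ, eB b u * ((-2*(u:ℂ) - 2*Complex.I*b) * ((P.eval (a+u) : ℝ):ℂ) * ((Q.eval (a-u):ℝ):ℂ)
      + ((P.derivative.eval (a+u):ℝ):ℂ) * ((Q.eval (a-u):ℝ):ℂ)
      - ((P.eval (a+u):ℝ):ℂ) * ((Q.derivative.eval (a-u):ℝ):ℂ))
      = eB b u * ((S.eval u : ℝ):ℂ) + (-2*Complex.I*(b:ℂ)) * (eB b u * ((T.eval u : ℝ):ℂ)) := by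
    intro u
    simp only [hS, hT, Polynomial.eval_mul, Polynomial.eval_add, Polynomial.eval_sub,
      Polynomial.eval_comp, Polynomial.eval_C, Polynomial.eval_X]
    push_cast
    ring
  have hint : Integrable (fun u : ℝ => eB b u * ((-2*(u:ℂ) - 2*Complex.I*b) * ((P.eval (a+u) : ℝ):ℂ) * ((Q.eval (a-u):ℝ):ℂ)
      + ((P.derivative.eval (a+u):ℝ):ℂ) * ((Q.eval (a-u):ℝ):ℂ)
      - ((P.eval (a+u):ℝ):ℂ) * ((Q.derivative.eval (a-u):ℝ):ℂ))) := by
    refine (((integrable_cexpPoly b S).add ((integrable_cexpPoly b T).const_mul (-2*Complex.I*(b:ℂ)))).congr ?_)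
    filter_upwards with u
    exact (hpt u).symm
  have htop : Tendsto (fun u : ℝ => eB b u * ((P.eval (a+u):ℝ):ℂ) * ((Q.eval (a-u):ℝ):ℂ))
      atTop (𝓝 0) := by
    have h := tendsto_cexpPoly b T atTop tendsto_pow_gauss_atTop
    refine h.congr fun u => ?_
    simp only [hT, Polynomial.eval_mul, Polynomial.eval_comp, Polynomial.eval_add,
      Polynomial.eval_sub, Polynomial.eval_C, Polynomial.eval_X]
    push_cast
    ring
  have hbot : Tendsto (fun u : ℝ => eB b u * ((P.eval (a+u):ℝ):ℂ) * ((Q.eval (a-u):ℝ):ℂ))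
      atBot (𝓝 0) := by
    have h := tendsto_cexpPoly b T atBot tendsto_pow_gauss_atBot
    refine h.congr fun u => ?_
    simp only [hT, Polynomial.eval_mul, Polynomial.eval_comp, Polynomial.eval_add,
      Polynomial.eval_sub, Polynomial.eval_C, Polynomial.eval_X]
    push_cast
    ring
  have hderiv : ∀ u : ℝ, HasDerivAt (fun u : ℝ => eB b u * ((P.eval (a+u):ℝ):ℂ) * ((Q.eval (a-u):ℝ):ℂ))
      (eB b u * ((-2*(u:ℂ) - 2*Complex.I*b) * ((P.eval (a+u) : ℝ):ℂ) * ((Q.eval (a-u):ℝ):ℂ)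
      + ((P.derivative.eval (a+u):ℝ):ℂ) * ((Q.eval (a-u):ℝ):ℂ)
      - ((P.eval (a+u):ℝ):ℂ) * ((Q.derivative.eval (a-u):ℝ):ℂ))) u := by
    intro u
    have := ((hasDerivAt_eB b u).fun_mul (hasDerivAt_polyAdd P a u)).fun_mul (hasDerivAt_polySub Q a u)
    refine this.congr_deriv ?_
    push_cast
    ring
  have hz := MeasureTheory.integral_of_hasDerivAt_of_tendsto hderiv hint hbot htop
  simpa using hz

-- Part 4
noncomputable def Gint (b a : ℝ) (m n : ℕ) : ℂ :=
  ∫ u : ℝ, eB b u * (((HP m).eval (a+u) : ℝ):ℂ) * (((HP n).eval (a-u) : ℝ):ℂ)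

lemma integrable_Gpair (b a : ℝ) (P Q : Polynomial ℝ) :
    Integrable (fun u : ℝ => eB b u * ((P.eval (a+u):ℝ):ℂ) * ((Q.eval (a-u):ℝ):ℂ)) := by
  refine (integrable_cexpPoly b ((P.comp (C a + X)) * (Q.comp (C a - X)))).congr ?_
  filter_upwards with u
  simp only [Polynomial.eval_mul, Polynomial.eval_comp, Polynomial.eval_add,
    Polynomial.eval_sub, Polynomial.eval_C, Polynomial.eval_X]
  push_cast
  ring

lemma Gint_zero_zero (b a : ℝ) :
    Gint b a 0 0 = (Real.pi:ℂ)^(1/2:ℂ) * Complex.exp (-(b:ℂ)^2) := by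
  rw [Gint]
  have hpt : ∀ u : ℝ, eB b u * (((HP 0).eval (a+u) : ℝ):ℂ) * (((HP 0).eval (a-u) : ℝ):ℂ)
      = Complex.exp ((-1)*(u:ℂ)^2 + (-2*Complex.I*b)*u + 0) := by
    intro u
    simp only [HP, Polynomial.eval_one, Complex.ofReal_one, mul_one, eB]
    congr 1
    ring
  rw [integral_congr_ae (Filter.Eventually.of_forall hpt)]
  rw [integral_cexp_quadratic (by norm_num) (-2*Complex.I*b) 0]
  congr 1
  · norm_num
  · congr 1
    rw [show ((-2*Complex.I*(b:ℂ))^2) = -4*(b:ℂ)^2 by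
      rw [mul_pow, mul_pow]; rw [Complex.I_sq]; ring]
    ring

lemma Gint_rec1 (b a : ℝ) (m n : ℕ) :
    Gint b a (m+1) n = (2*(a:ℂ) - 2*Complex.I*b) * Gint b a m n
      - 2*(n:ℂ) * Gint b a m (n-1) := by
  have h0 := integral_ibp_zero b a (HP m) (HP n)
  have hpt : ∀ u : ℝ, eB b u * ((-2*(u:ℂ) - 2*Complex.I*b) * (((HP m).eval (a+u) : ℝ):ℂ) * (((HP n).eval (a-u):ℝ):ℂ)
      + (((HP m).derivative.eval (a+u):ℝ):ℂ) * (((HP n).eval (a-u):ℝ):ℂ)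
      - (((HP m).eval (a+u):ℝ):ℂ) * (((HP n).derivative.eval (a-u):ℝ):ℂ))
      = -(eB b u * (((HP (m+1)).eval (a+u):ℝ):ℂ) * (((HP n).eval (a-u):ℝ):ℂ))
        + (2*(a:ℂ) - 2*Complex.I*b) * (eB b u * (((HP m).eval (a+u):ℝ):ℂ) * (((HP n).eval (a-u):ℝ):ℂ))
        - 2*(n:ℂ) * (eB b u * (((HP m).eval (a+u):ℝ):ℂ) * (((HP (n-1)).eval (a-u):ℝ):ℂ)) := by
    intro u
    rw [HP_derivative m, HP_derivative n, HP_succ m]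
    simp only [Polynomial.eval_mul, Polynomial.eval_sub, Polynomial.eval_natCast,
      Polynomial.eval_ofNat, Polynomial.eval_X]
    push_cast
    ring
  rw [integral_congr_ae (Filter.Eventually.of_forall hpt)] at h0
  have i1 := integrable_Gpair b a (HP (m+1)) (HP n)
  have i2 := (integrable_Gpair b a (HP m) (HP n)).const_mul (2*(a:ℂ) - 2*Complex.I*b)
  have i3 := (integrable_Gpair b a (HP m) (HP (n-1))).const_mul (2*(n:ℂ))
  have i1n : Integrable (fun u : ℝ => -(eB b u * (((HP (m+1)).eval (a+u):ℝ):ℂ) * (((HP n).eval (a-u):ℝ):ℂ))) := i1.neg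
  have i2' : Integrable (fun u : ℝ => (2*(a:ℂ) - 2*Complex.I*b) * (eB b u * (((HP m).eval (a+u):ℝ):ℂ) * (((HP n).eval (a-u):ℝ):ℂ))) := i2
  have i3' : Integrable (fun u : ℝ => 2*(n:ℂ) * (eB b u * (((HP m).eval (a+u):ℝ):ℂ) * (((HP (n-1)).eval (a-u):ℝ):ℂ))) := i3
  have i12 : Integrable (fun u : ℝ => -(eB b u * (((HP (m+1)).eval (a+u):ℝ):ℂ) * (((HP n).eval (a-u):ℝ):ℂ))
      + (2*(a:ℂ) - 2*Complex.I*b) * (eB b u * (((HP m).eval (a+u):ℝ):ℂ) * (((HP n).eval (a-u):ℝ):ℂ))) := i1n.add i2'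
  rw [integral_sub i12 i3', integral_add i1n i2', integral_neg,
    integral_const_mul, integral_const_mul] at h0
  rw [Gint, Gint, Gint]
  linear_combination -h0

lemma Gint_rec2 (b a : ℝ) (m n : ℕ) :
    Gint b a m (n+1) = (2*(a:ℂ) + 2*Complex.I*b) * Gint b a m n
      - 2*(m:ℂ) * Gint b a (m-1) n := by
  have h0 := integral_ibp_zero b a (HP m) (HP n)
  have hpt : ∀ u : ℝ, eB b u * ((-2*(u:ℂ) - 2*Complex.I*b) * (((HP m).eval (a+u) : ℝ):ℂ) * (((HP n).eval (a-u):ℝ):ℂ)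
      + (((HP m).derivative.eval (a+u):ℝ):ℂ) * (((HP n).eval (a-u):ℝ):ℂ)
      - (((HP m).eval (a+u):ℝ):ℂ) * (((HP n).derivative.eval (a-u):ℝ):ℂ))
      = (eB b u * (((HP m).eval (a+u):ℝ):ℂ) * (((HP (n+1)).eval (a-u):ℝ):ℂ))
        - (2*(a:ℂ) + 2*Complex.I*b) * (eB b u * (((HP m).eval (a+u):ℝ):ℂ) * (((HP n).eval (a-u):ℝ):ℂ))
        + 2*(m:ℂ) * (eB b u * (((HP (m-1)).eval (a+u):ℝ):ℂ) * (((HP n).eval (a-u):ℝ):ℂ)) := by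
    intro u
    rw [HP_derivative m, HP_derivative n, HP_succ n]
    simp only [Polynomial.eval_mul, Polynomial.eval_sub, Polynomial.eval_natCast,
      Polynomial.eval_ofNat, Polynomial.eval_X]
    push_cast
    ring
  rw [integral_congr_ae (Filter.Eventually.of_forall hpt)] at h0
  have i1 := integrable_Gpair b a (HP m) (HP (n+1))
  have i2 := (integrable_Gpair b a (HP m) (HP n)).const_mul (2*(a:ℂ) + 2*Complex.I*b)
  have i3 := (integrable_Gpair b a (HP (m-1)) (HP n)).const_mul (2*(m:ℂ))
  have i2' : Integrable (fun u : ℝ => (2*(a:ℂ) + 2*Complex.I*b) * (eB b u * (((HP m).eval (a+u):ℝ):ℂ) * (((HP n).eval (a-u):ℝ):ℂ))) := i2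
  have i3' : Integrable (fun u : ℝ => 2*(m:ℂ) * (eB b u * (((HP (m-1)).eval (a+u):ℝ):ℂ) * (((HP n).eval (a-u):ℝ):ℂ))) := i3
  have i12 : Integrable (fun u : ℝ => eB b u * (((HP m).eval (a+u):ℝ):ℂ) * (((HP (n+1)).eval (a-u):ℝ):ℂ)
      - (2*(a:ℂ) + 2*Complex.I*b) * (eB b u * (((HP m).eval (a+u):ℝ):ℂ) * (((HP n).eval (a-u):ℝ):ℂ))) := i1.sub i2'
  rw [integral_add i12 i3', integral_sub i1 i2',
    integral_const_mul, integral_const_mul] at h0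
  rw [Gint, Gint, Gint]
  linear_combination h0

-- Part 5
noncomputable def EPt (b a : ℝ) (m n k : ℕ) : ℂ :=
  (-2:ℂ)^k * (Nat.factorial k : ℂ) * (Nat.choose m k : ℂ) * (Nat.choose n k : ℂ)
    * (2*((a:ℂ) - Complex.I*b))^(m-k) * (2*((a:ℂ) + Complex.I*b))^(n-k)

noncomputable def EP (b a : ℝ) (m n : ℕ) : ℂ := ∑ k ∈ range (m+1), EPt b a m n k

lemma EP_zero (b a : ℝ) (n : ℕ) : EP b a 0 n = (2*((a:ℂ) + Complex.I*b))^n := by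
  simp [EP, EPt]

lemma EPt_n0 (b a : ℝ) (m k : ℕ) (hk : k ≠ 0) : EPt b a m 0 k = 0 := by
  obtain ⟨j, rfl⟩ := Nat.exists_eq_succ_of_ne_zero hk
  simp [EPt, Nat.choose_zero_succ]

lemma EP_n0 (b a : ℝ) (m : ℕ) : EP b a m 0 = (2*((a:ℂ) - Complex.I*b))^m := by
  rw [EP, Finset.sum_eq_single 0]
  · simp [EPt]
  · intro k _ hk
    exact EPt_n0 b a m k hk
  · intro h
    exact absurd (Finset.mem_range.2 (Nat.succ_pos m)) h

lemma choosePow_helper (c : ℂ) (n i : ℕ) :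
    ((n.choose (i+1) : ℕ) : ℂ) * c^(n-i) = ((n.choose (i+1) : ℕ) : ℂ) * c * c^(n-(i+1)) := by
  rcases le_or_gt (i+1) n with h | h
  · have he : n - i = (n - (i+1)) + 1 := by omega
    rw [he, pow_succ]
    ring
  · rw [Nat.choose_eq_zero_of_lt h]
    simp

lemma succ_mul_choose_cast (n i : ℕ) :
    ((i:ℂ)+1) * (((n+1).choose (i+1) : ℕ) : ℂ) = ((n:ℂ)+1) * ((n.choose i : ℕ) : ℂ) := by
  have h2 : ((n+1) * n.choose i : ℕ) = ((n+1).choose (i+1) * (i+1) : ℕ) := by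
    simpa [Nat.succ_eq_add_one] using Nat.add_one_mul_choose_eq n i
  have h3 := congrArg (fun t : ℕ => (t : ℂ)) h2
  push_cast at h3
  linear_combination -h3

lemma EPt_rec1 (b a : ℝ) (m N i : ℕ) :
    EPt b a (m+1) (N+1) (i+1)
      = (2*((a:ℂ) - Complex.I*b)) * EPt b a m (N+1) (i+1)
        - 2*((N:ℂ)+1) * EPt b a m N i := by
  have e1 : m + 1 - (i+1) = m - i := by omega
  have e2 : N + 1 - (i+1) = N - i := by omega
  have hpow := choosePow_helper (2*((a:ℂ) - Complex.I*b)) m i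
  have hsm := succ_mul_choose_cast N i
  rw [EPt, EPt, EPt, e1, e2]
  rw [show ((m+1).choose (i+1)) = m.choose i + m.choose (i+1) from Nat.choose_succ_succ m i]
  push_cast [Nat.factorial_succ]
  linear_combination
    (-2*(-2:ℂ)^i * (Nat.factorial i : ℂ) * ((m.choose i : ℕ) : ℂ)
      * (2*((a:ℂ) - Complex.I*b))^(m-i) * (2*((a:ℂ) + Complex.I*b))^(N-i)) * hsm
    + (-2*(-2:ℂ)^i * ((i:ℂ)+1) * (Nat.factorial i : ℂ) * (((N+1).choose (i+1) : ℕ) : ℂ)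
      * (2*((a:ℂ) + Complex.I*b))^(N-i)) * hpow

lemma EPt_rec2 (b a : ℝ) (M n i : ℕ) :
    EPt b a (M+1) (n+1) (i+1)
      = (2*((a:ℂ) + Complex.I*b)) * EPt b a (M+1) n (i+1)
        - 2*((M:ℂ)+1) * EPt b a M n i := by
  have e1 : M + 1 - (i+1) = M - i := by omega
  have e2 : n + 1 - (i+1) = n - i := by omega
  have hpow := choosePow_helper (2*((a:ℂ) + Complex.I*b)) n i
  have hsm := succ_mul_choose_cast M i
  rw [EPt, EPt, EPt, e1, e2]
  rw [show ((n+1).choose (i+1)) = n.choose i + n.choose (i+1) from Nat.choose_succ_succ n i]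
  push_cast [Nat.factorial_succ]
  linear_combination
    (-2*(-2:ℂ)^i * (Nat.factorial i : ℂ) * ((n.choose i : ℕ) : ℂ)
      * (2*((a:ℂ) - Complex.I*b))^(M-i) * (2*((a:ℂ) + Complex.I*b))^(n-i)) * hsm
    + (-2*(-2:ℂ)^i * ((i:ℂ)+1) * (Nat.factorial i : ℂ) * (((M+1).choose (i+1) : ℕ) : ℂ)
      * (2*((a:ℂ) - Complex.I*b))^(M-i)) * hpow

lemma EP_rec1 (b a : ℝ) (m n : ℕ) :
    EP b a (m+1) n = (2*(a:ℂ) - 2*Complex.I*b) * EP b a m n - 2*(n:ℂ) * EP b a m (n-1) := by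
  cases n with
  | zero =>
      rw [EP_n0, EP_n0]
      push_cast
      rw [pow_succ]
      ring
  | succ N =>
      rw [EP, Finset.sum_range_succ']
      have hterm : ∀ i ∈ range (m+1), EPt b a (m+1) (N+1) (i+1)
          = (2*((a:ℂ) - Complex.I*b)) * EPt b a m (N+1) (i+1)
            - 2*((N:ℂ)+1) * EPt b a m N i :=
        fun i _ => EPt_rec1 b a m N i
      rw [Finset.sum_congr rfl hterm, Finset.sum_sub_distrib, ← Finset.mul_sum, ← Finset.mul_sum]
      have hlast : EPt b a m (N+1) (m+1) = 0 := by
        simp [EPt, Nat.choose_succ_self]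
      rw [Finset.sum_range_succ (fun i => EPt b a m (N+1) (i+1)) m, hlast, add_zero]
      have hEP1 : EP b a m (N+1) = ∑ i ∈ range m, EPt b a m (N+1) (i+1) + EPt b a m (N+1) 0 := by
        rw [EP, Finset.sum_range_succ']
      have hEP2 : EP b a m N = ∑ i ∈ range (m+1), EPt b a m N i := rfl
      have h0 : EPt b a (m+1) (N+1) 0 = (2*((a:ℂ) - Complex.I*b)) * EPt b a m (N+1) 0 := by
        simp only [EPt, Nat.sub_zero, Nat.choose_zero_right, pow_succ]
        push_cast
        ring
      simp only [Nat.add_sub_cancel]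
      rw [hEP1, hEP2, h0]
      push_cast
      ring

lemma EP_rec2 (b a : ℝ) (m n : ℕ) :
    EP b a m (n+1) = (2*(a:ℂ) + 2*Complex.I*b) * EP b a m n - 2*(m:ℂ) * EP b a (m-1) n := by
  cases m with
  | zero =>
      rw [EP_zero, EP_zero]
      push_cast
      rw [pow_succ]
      ring
  | succ M =>
      rw [EP, Finset.sum_range_succ']
      have hterm : ∀ i ∈ range (M+1), EPt b a (M+1) (n+1) (i+1)
          = (2*((a:ℂ) + Complex.I*b)) * EPt b a (M+1) n (i+1)
            - 2*((M:ℂ)+1) * EPt b a M n i :=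
        fun i _ => EPt_rec2 b a M n i
      rw [Finset.sum_congr rfl hterm, Finset.sum_sub_distrib, ← Finset.mul_sum, ← Finset.mul_sum]
      have hEP1 : EP b a (M+1) n = ∑ i ∈ range (M+1), EPt b a (M+1) n (i+1) + EPt b a (M+1) n 0 := by
        rw [EP, Finset.sum_range_succ']
      have hEP2 : EP b a M n = ∑ i ∈ range (M+1), EPt b a M n i := rfl
      have h0 : EPt b a (M+1) (n+1) 0 = (2*((a:ℂ) + Complex.I*b)) * EPt b a (M+1) n 0 := by
        simp only [EPt, Nat.sub_zero, Nat.choose_zero_right, pow_succ]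
        push_cast
        ring
      simp only [Nat.add_sub_cancel]
      rw [hEP1, hEP2, h0]
      push_cast
      ring

lemma Gint_eq (b a : ℝ) : ∀ m n, Gint b a m n
    = (Real.pi:ℂ)^(1/2:ℂ) * Complex.exp (-(b:ℂ)^2) * EP b a m n := by
  have base : ∀ n, Gint b a 0 n
      = (Real.pi:ℂ)^(1/2:ℂ) * Complex.exp (-(b:ℂ)^2) * EP b a 0 n := by
    intro n
    induction n with
    | zero =>
        rw [Gint_zero_zero, EP_n0]
        simp
    | succ N ih =>
        rw [Gint_rec2, ih, EP_rec2]
        push_cast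
        ring
  intro m
  induction m with
  | zero => exact base
  | succ M ih =>
      intro n
      rw [Gint_rec1, ih n, ih (n-1), EP_rec1]
      ring

-- Part 6
lemma lag_sum (n : ℕ) (s : ℝ) :
    ∑ k ∈ range (n+1), (-2:ℝ)^k * (k.factorial:ℝ) * ((n.choose k : ℕ):ℝ)^2 * (4*s)^(n-k)
      = (-1:ℝ)^n * (2^n * (n.factorial:ℝ)) * laguerre n 0 (2*s) := by
  rw [laguerre, Finset.mul_sum,
    ← Finset.sum_range_reflect (fun k => (-2:ℝ)^k * (k.factorial:ℝ) * ((n.choose k : ℕ):ℝ)^2 * (4*s)^(n-k)) (n+1)]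
  refine Finset.sum_congr rfl ?_
  intro j hj
  have hjn : j ≤ n := by simpa [Nat.lt_succ_iff] using hj
  have e0 : n + 1 - 1 - j = n - j := by omega
  have e2 : n - (n - j) = j := by omega
  have key : ((n.choose j : ℕ):ℝ) * (j.factorial:ℝ) * ((n-j).factorial:ℝ) = (n.factorial:ℝ) := by
    exact_mod_cast congrArg (fun t : ℕ => (t:ℝ)) (Nat.choose_mul_factorial_mul_factorial hjn)
  have hfac : (j.factorial : ℝ) ≠ 0 := Nat.cast_ne_zero.2 (Nat.factorial_ne_zero j)
  have h2 : (-1:ℝ)^n = (-1:ℝ)^(n-j) * (-1:ℝ)^j := by rw [← pow_add]; congr 1; omega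
  have h3 : (2:ℝ)^n = (2:ℝ)^(n-j) * (2:ℝ)^j := by rw [← pow_add]; congr 1; omega
  rw [e0, e2, Nat.choose_symm hjn, Nat.add_zero]
  rw [show ((-2:ℝ)) = (-1) * 2 by norm_num, mul_pow, show ((4:ℝ)*s) = (2*(2*s)) by ring, mul_pow]
  rw [h2, h3]
  field_simp
  rw [← key]
  have hmul : ((-2:ℝ))^j * (-1:ℝ)^j = 2^j := by rw [← mul_pow]; norm_num
  have hsq : (2:ℝ)^(j*2) = 2^j * 2^j := by rw [pow_mul]; ring
  have hpm : (-1:ℝ)^j * (-1:ℝ)^j = 1 := by rw [← mul_pow]; norm_num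
  have hpm2 : (-1:ℝ)^(j*2) = 1 := by rw [mul_comm, pow_mul]; norm_num
  rw [Nat.choose_symm hjn, neg_pow]
  linear_combination (-(((n-j).factorial:ℝ) * ((n.choose j : ℕ):ℝ)^2 * (2*s)^j * (j.factorial:ℝ))) * hpm
    - (((n-j).factorial:ℝ) * ((n.choose j : ℕ):ℝ)^2 * s^j * (j.factorial:ℝ)) * hmul
    + (((n-j).factorial:ℝ) * ((n.choose j : ℕ):ℝ)^2 * s^j * (j.factorial:ℝ) * 2^j) * hpm2

-- Part 7
lemma integrand_eq (ε x p : ℝ) (hε : 0 < ε) (n : ℕ) (u : ℝ) :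
    Complex.exp (-Complex.I * (p:ℂ) * ((2*Real.sqrt ε*u : ℝ):ℂ) / (ε:ℂ))
      * ((hermiteFun ε n (x + (2*Real.sqrt ε*u)/2) : ℝ):ℂ)
      * (starRingEnd ℂ) ((hermiteFun ε n (x - (2*Real.sqrt ε*u)/2) : ℝ):ℂ)
    = (((Real.pi*ε)^(-(1/2:ℝ)) * ((2:ℝ)^n * (n.factorial:ℝ))⁻¹ * Real.exp (-x^2/ε) : ℝ) : ℂ)
        * (eB (p / Real.sqrt ε) u
          * (((HP n).eval (x / Real.sqrt ε + u):ℝ):ℂ)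
          * (((HP n).eval (x / Real.sqrt ε - u):ℝ):ℂ)) := by
  have hs : 0 < Real.sqrt ε := Real.sqrt_pos.2 hε
  have hs2 : Real.sqrt ε * Real.sqrt ε = ε := Real.mul_self_sqrt hε.le
  have hsne : Real.sqrt ε ≠ 0 := ne_of_gt hs
  have hεne : ε ≠ 0 := ne_of_gt hε
  rw [Complex.conj_ofReal, hermiteFun, hermiteFun, hermitePoly_eq, hermitePoly_eq]
  have e1 : x + (2*Real.sqrt ε*u)/2 = x + Real.sqrt ε*u := by ring
  have e2 : x - (2*Real.sqrt ε*u)/2 = x - Real.sqrt ε*u := by ring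
  have e3 : (x + Real.sqrt ε*u)/Real.sqrt ε = x / Real.sqrt ε + u := by
    field_simp
  have e4 : (x - Real.sqrt ε*u)/Real.sqrt ε = x / Real.sqrt ε - u := by
    field_simp
  rw [e1, e2, e3, e4]
  -- real-side component identities
  have hA1r : (Real.pi*ε)^(-(1/4:ℝ)) * (Real.pi*ε)^(-(1/4:ℝ)) = (Real.pi*ε)^(-(1/2:ℝ)) := by
    rw [← Real.rpow_add (by positivity)]
    norm_num
  have hA2r : ((2:ℝ)^n * (n.factorial:ℝ))^(-(1/2:ℝ)) * ((2:ℝ)^n * (n.factorial:ℝ))^(-(1/2:ℝ))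
      = ((2:ℝ)^n * (n.factorial:ℝ))⁻¹ := by
    rw [← Real.rpow_add (by positivity),
      show (-(1/2:ℝ)) + (-(1/2:ℝ)) = -1 by norm_num, Real.rpow_neg_one]
  have hEr : Real.exp (-(x + Real.sqrt ε*u)^2/(2*ε)) * Real.exp (-(x - Real.sqrt ε*u)^2/(2*ε))
      = Real.exp (-x^2/ε) * Real.exp (-u^2) := by
    rw [← Real.exp_add, ← Real.exp_add]
    congr 1
    field_simp
    linear_combination (-2*u^2) * hs2
  have hprodR : ((Real.pi * ε) ^ (-(1 / 4 : ℝ)) * ((2 : ℝ) ^ n * (n.factorial : ℝ)) ^ (-(1 / 2 : ℝ)) *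
        Real.exp (-(x + Real.sqrt ε*u) ^ 2 / (2 * ε)) * (HP n).eval (x / Real.sqrt ε + u))
      * ((Real.pi * ε) ^ (-(1 / 4 : ℝ)) * ((2 : ℝ) ^ n * (n.factorial : ℝ)) ^ (-(1 / 2 : ℝ)) *
        Real.exp (-(x - Real.sqrt ε*u) ^ 2 / (2 * ε)) * (HP n).eval (x / Real.sqrt ε - u))
      = ((Real.pi*ε)^(-(1/2:ℝ)) * ((2:ℝ)^n * (n.factorial:ℝ))⁻¹ * Real.exp (-x^2/ε))
        * (Real.exp (-u^2) * ((HP n).eval (x / Real.sqrt ε + u) * (HP n).eval (x / Real.sqrt ε - u))) := by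
    linear_combination
      (((2:ℝ)^n * (n.factorial:ℝ))^(-(1/2:ℝ)) * ((2:ℝ)^n * (n.factorial:ℝ))^(-(1/2:ℝ))
        * Real.exp (-(x + Real.sqrt ε*u)^2/(2*ε)) * Real.exp (-(x - Real.sqrt ε*u)^2/(2*ε))
        * (HP n).eval (x / Real.sqrt ε + u) * (HP n).eval (x / Real.sqrt ε - u)) * hA1r
      + ((Real.pi*ε)^(-(1/2:ℝ))
        * Real.exp (-(x + Real.sqrt ε*u)^2/(2*ε)) * Real.exp (-(x - Real.sqrt ε*u)^2/(2*ε))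
        * (HP n).eval (x / Real.sqrt ε + u) * (HP n).eval (x / Real.sqrt ε - u)) * hA2r
      + ((Real.pi*ε)^(-(1/2:ℝ)) * ((2:ℝ)^n * (n.factorial:ℝ))⁻¹
        * (HP n).eval (x / Real.sqrt ε + u) * (HP n).eval (x / Real.sqrt ε - u)) * hEr
  have hph : Complex.exp (-Complex.I * (p:ℂ) * ((2*Real.sqrt ε*u : ℝ):ℂ) / (ε:ℂ))
        * ((Real.exp (-u^2) : ℝ):ℂ)
      = eB (p / Real.sqrt ε) u := by
    rw [eB, Complex.ofReal_exp, ← Complex.exp_add]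
    congr 1
    have hs2c : ((Real.sqrt ε : ℝ):ℂ) * ((Real.sqrt ε : ℝ):ℂ) = (ε:ℂ) := by
      rw [← Complex.ofReal_mul, hs2]
    have hsnec : ((Real.sqrt ε : ℝ):ℂ) ≠ 0 := by simpa using hsne
    have hεnec : ((ε:ℝ):ℂ) ≠ 0 := by simpa using hεne
    push_cast
    field_simp
    linear_combination (-2*Complex.I*(p:ℂ)*(u:ℂ)) * hs2c
  rw [mul_assoc, ← Complex.ofReal_mul, hprodR, ← hph]
  push_cast
  ring

lemma EP_diag (b a : ℝ) (n : ℕ) :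
    EP b a n n = (((-1:ℝ)^n * ((2:ℝ)^n * (n.factorial:ℝ)) * laguerre n 0 (2*(a^2+b^2)) : ℝ) : ℂ) := by
  rw [EP, ← lag_sum n (a^2+b^2)]
  push_cast
  refine Finset.sum_congr rfl ?_
  intro k hk
  rw [EPt]
  have hzz : (2*((a:ℂ) - Complex.I*b))^(n-k) * (2*((a:ℂ) + Complex.I*b))^(n-k)
      = (4*((a:ℂ)^2+(b:ℂ)^2))^(n-k) := by
    rw [← mul_pow]
    congr 1
    linear_combination (-4*(b:ℂ)^2) * Complex.I_sq
  linear_combination ((-2:ℂ)^k * ((k.factorial:ℕ):ℂ) * ((n.choose k : ℕ):ℂ)^2) * hzz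

-- Part 8

/-- Bartlett–Moyal formula (diagonal case): the Wigner transform of the nth Hermite
function is `W^ε[v_nᵋ](x,p) = ((−1)ⁿ/(πε)) e^{−(x²+p²)/ε} L_n(2(x²+p²)/ε)`. -/
theorem wigner_hermite_diagonal (ε : ℝ) (hε : 0 < ε) (n : ℕ) :
    ∀ x p : ℝ,
      crossWigner ε (fun t => (hermiteFun ε n t : ℂ))
          (fun t => (hermiteFun ε n t : ℂ)) x p
        = (((-1 : ℝ) ^ n / (Real.pi * ε) * Real.exp (-(x ^ 2 + p ^ 2) / ε) *
            laguerre n 0 (2 * (x ^ 2 + p ^ 2) / ε) : ℝ) : ℂ) := by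
  intro x p
  have hs : 0 < Real.sqrt ε := Real.sqrt_pos.2 hε
  have hs2 : Real.sqrt ε * Real.sqrt ε = ε := Real.mul_self_sqrt hε.le
  have hsq : Real.sqrt ε^2 = ε := by rw [sq]; exact hs2
  have hsne : Real.sqrt ε ≠ 0 := ne_of_gt hs
  have hεne : ε ≠ 0 := ne_of_gt hε
  simp only [crossWigner]
  have hI := MeasureTheory.Measure.integral_comp_mul_left
    (fun y : ℝ => Complex.exp (-Complex.I * (p:ℂ) * ((y:ℝ):ℂ) / (ε:ℂ)) *
      ((hermiteFun ε n (x + y/2) : ℝ):ℂ) * (starRingEnd ℂ) ((hermiteFun ε n (x - y/2) : ℝ):ℂ))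
    (2*Real.sqrt ε)
  have hone : (2*Real.sqrt ε) * |(2*Real.sqrt ε)⁻¹| = 1 := by
    rw [abs_inv, abs_of_pos (by positivity)]
    field_simp
  have hcv : (∫ y : ℝ, Complex.exp (-Complex.I * (p:ℂ) * ((y:ℝ):ℂ) / (ε:ℂ)) *
      ((hermiteFun ε n (x + y/2) : ℝ):ℂ) * (starRingEnd ℂ) ((hermiteFun ε n (x - y/2) : ℝ):ℂ))
      = (2*Real.sqrt ε) • ∫ u : ℝ,
        Complex.exp (-Complex.I * (p:ℂ) * ((2*Real.sqrt ε*u : ℝ):ℂ) / (ε:ℂ)) *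
        ((hermiteFun ε n (x + (2*Real.sqrt ε*u)/2) : ℝ):ℂ) *
        (starRingEnd ℂ) ((hermiteFun ε n (x - (2*Real.sqrt ε*u)/2) : ℝ):ℂ) := by
    rw [hI, smul_smul, hone, one_smul]
  rw [hcv]
  rw [integral_congr_ae (Filter.Eventually.of_forall (fun u => integrand_eq ε x p hε n u))]
  rw [MeasureTheory.integral_const_mul]
  have hG : (∫ u : ℝ, eB (p / Real.sqrt ε) u
      * (((HP n).eval (x / Real.sqrt ε + u):ℝ):ℂ)
      * (((HP n).eval (x / Real.sqrt ε - u):ℝ):ℂ)) = Gint (p / Real.sqrt ε) (x / Real.sqrt ε) n n := rfl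
  rw [hG, Gint_eq, EP_diag]
  have hπ : (Real.pi:ℂ)^(1/2:ℂ) = ((Real.sqrt Real.pi : ℝ):ℂ) := by
    have h1 := Complex.ofReal_cpow Real.pi_pos.le (1/2)
    rw [show (((1/2:ℝ)):ℂ) = (1/2:ℂ) by norm_num] at h1
    rw [← h1, Real.sqrt_eq_rpow]
  have hexpb : Complex.exp (-((p/Real.sqrt ε : ℝ):ℂ)^2) = ((Real.exp (-(p/Real.sqrt ε)^2) : ℝ):ℂ) := by
    rw [Complex.ofReal_exp]
    congr 1
    push_cast
    ring
  rw [hπ]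
  rw [show (-(((p / Real.sqrt ε : ℝ)):ℂ)^2) = -(((p/Real.sqrt ε : ℝ):ℂ))^2 from rfl] at hexpb
  rw [hexpb, Complex.real_smul]
  -- final real identity
  have harg : 2*((x/Real.sqrt ε)^2+(p/Real.sqrt ε)^2) = 2*(x^2+p^2)/ε := by
    rw [div_pow, div_pow, hsq]
    field_simp
  have hexp2 : Real.exp (-x^2/ε) * Real.exp (-(p/Real.sqrt ε)^2) = Real.exp (-(x^2+p^2)/ε) := by
    rw [← Real.exp_add]
    congr 1
    rw [div_pow, hsq]
    field_simp
    ring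
  have hrp : (Real.pi*ε)^(-(1/2:ℝ)) = (Real.sqrt Real.pi * Real.sqrt ε)⁻¹ := by
    rw [Real.rpow_neg (by positivity),
      show ((Real.pi*ε)^((1/2:ℝ)) : ℝ) = Real.sqrt (Real.pi*ε) from (Real.sqrt_eq_rpow _).symm,
      Real.sqrt_mul Real.pi_pos.le]
  have hsπ : (0:ℝ) < Real.sqrt Real.pi := Real.sqrt_pos.2 Real.pi_pos
  have hfacpos : (0:ℝ) < (2:ℝ)^n * (n.factorial:ℝ) := by positivity
  have key : (2*Real.pi*ε)⁻¹ * ((2*Real.sqrt ε)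
        * (((Real.pi*ε)^(-(1/2:ℝ)) * ((2:ℝ)^n * (n.factorial:ℝ))⁻¹ * Real.exp (-x^2/ε))
          * (Real.sqrt Real.pi * (Real.exp (-(p/Real.sqrt ε)^2)
            * ((-1:ℝ)^n * ((2:ℝ)^n * (n.factorial:ℝ))
              * laguerre n 0 (2*((x/Real.sqrt ε)^2+(p/Real.sqrt ε)^2)))))))
      = (-1:ℝ)^n / (Real.pi*ε) * Real.exp (-(x^2+p^2)/ε) * laguerre n 0 (2*(x^2+p^2)/ε) := by
    rw [harg, hrp, ← hexp2]
    field_simp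
  have keyc := congrArg (fun t : ℝ => (t:ℂ)) key
  push_cast at keyc
  push_cast
  linear_combination keyc
end

section
/- Stationary points of the diagonal Wigner phase of the harmonic oscillator: let E > 0, x ∈ ℝ and p > 0 satisfy x² + p² ≤ 2E and (x² + p²)² ≥ 2E·x², and set σ₀ = (p/√(x² + p²))·√(2E − x² − p²). Then a real number σ satisfies the three conditions (x + σ)² ≤ 2E, (x − σ)² ≤ 2E, and √(2E − (x + σ)²) + √(2E − (x − σ)²) = 2p if and only if σ = σ₀ or σ = −σ₀. -/
private lemma le_of_sq_sub_sq_eq_sq {c d k : ℝ} (hc : 0 ≤ c)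
    (h : c ^ 2 - d ^ 2 = k ^ 2) : d ≤ c := by
  nlinarith [sq_nonneg k, sq_nonneg (c - d), sq_nonneg (c + d)]

set_option maxHeartbeats 1000000 in
/-- Stationary points of the diagonal Wigner phase of the harmonic oscillator:
for `(x,p)` with `p > 0` inside the Lagrangian circle `x² + p² ≤ 2E` and outside the
dual circles (`(x² + p²)² ≥ 2E x²`), a real number `σ` satisfies
`(x ± σ)² ≤ 2E` and `√(2E − (x+σ)²) + √(2E − (x−σ)²) = 2p` if and only if
`σ = ±σ₀`, where `σ₀ = (p/√(x²+p²)) √(2E − x² − p²)`. -/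
theorem diag_wigner_stationary_points (E x p : ℝ) (hE : 0 < E) (hp : 0 < p)
    (h1 : x ^ 2 + p ^ 2 ≤ 2 * E) (h2 : (x ^ 2 + p ^ 2) ^ 2 ≥ 2 * E * x ^ 2) :
    ∀ σ : ℝ,
      ((x + σ) ^ 2 ≤ 2 * E ∧ (x - σ) ^ 2 ≤ 2 * E ∧
        Real.sqrt (2 * E - (x + σ) ^ 2) + Real.sqrt (2 * E - (x - σ) ^ 2) = 2 * p)
      ↔ (σ = p / Real.sqrt (x ^ 2 + p ^ 2) * Real.sqrt (2 * E - x ^ 2 - p ^ 2)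
          ∨ σ = -(p / Real.sqrt (x ^ 2 + p ^ 2) * Real.sqrt (2 * E - x ^ 2 - p ^ 2))) := by
  intro σ
  have h2E : (0:ℝ) ≤ 2 * E - x ^ 2 - p ^ 2 := by linarith
  have hr : (0:ℝ) < x ^ 2 + p ^ 2 := by positivity
  set s := Real.sqrt (x ^ 2 + p ^ 2) with hs_def
  set t := Real.sqrt (2 * E - x ^ 2 - p ^ 2) with ht_def
  have hs : 0 < s := Real.sqrt_pos.mpr hr
  have hs2 : s ^ 2 = x ^ 2 + p ^ 2 := Real.sq_sqrt hr.le
  have ht0 : 0 ≤ t := Real.sqrt_nonneg _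
  have ht2 : t ^ 2 = 2 * E - x ^ 2 - p ^ 2 := Real.sq_sqrt h2E
  have hσ₀0 : 0 ≤ p / s * t := by positivity
  have hσ₀2 : (p / s * t) ^ 2 * (x ^ 2 + p ^ 2) = p ^ 2 * (2 * E - x ^ 2 - p ^ 2) := by
    rw [← hs2, ← ht2]
    field_simp
  constructor
  · rintro ⟨ha, hb, hsum⟩
    set A := Real.sqrt (2 * E - (x + σ) ^ 2) with hA_def
    set B := Real.sqrt (2 * E - (x - σ) ^ 2) with hB_def
    have hA0 : 0 ≤ A := Real.sqrt_nonneg _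
    have hB0 : 0 ≤ B := Real.sqrt_nonneg _
    have hA2 : A ^ 2 = 2 * E - (x + σ) ^ 2 := Real.sq_sqrt (by linarith)
    have hB2 : B ^ 2 = 2 * E - (x - σ) ^ 2 := Real.sq_sqrt (by linarith)
    have hABsum : A ^ 2 + 2 * (A * B) + B ^ 2 = 4 * p ^ 2 := by
      linear_combination (A + B + 2 * p) * hsum
    have hAB : A * B = 2 * p ^ 2 - 2 * E + x ^ 2 + σ ^ 2 := by linarith
    have hAB2 : (A * B) ^ 2 = (2 * E - (x + σ) ^ 2) * (2 * E - (x - σ) ^ 2) := by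
      rw [mul_pow, hA2, hB2]
    rw [hAB] at hAB2
    have hkey : σ ^ 2 * (x ^ 2 + p ^ 2) = p ^ 2 * (2 * E - x ^ 2 - p ^ 2) := by
      linear_combination hAB2 / 4
    have hsq : σ ^ 2 = (p / s * t) ^ 2 :=
      mul_right_cancel₀ hr.ne' (hkey.trans hσ₀2.symm)
    have hfac : (σ - p / s * t) * (σ + p / s * t) = 0 := by linear_combination hsq
    rcases mul_eq_zero.mp hfac with h | h
    · left; linarith
    · right; linarith
  · intro h
    have hsq : σ ^ 2 = (p / s * t) ^ 2 := by
      rcases h with h | h <;> rw [h] <;> ring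
    have hkey : σ ^ 2 * (x ^ 2 + p ^ 2) = p ^ 2 * (2 * E - x ^ 2 - p ^ 2) := by
      rw [hsq]; exact hσ₀2
    have hpos : 0 ≤ 2 * E - x ^ 2 - σ ^ 2 := by nlinarith
    have hdisc : ((x ^ 2 + p ^ 2) * (2 * E - x ^ 2 - σ ^ 2)) ^ 2
        - ((x ^ 2 + p ^ 2) * (2 * x * σ)) ^ 2
        = ((x ^ 2 + p ^ 2) ^ 2 - 2 * E * x ^ 2) ^ 2 := by
      linear_combination (σ ^ 2 * (x ^ 2 + p ^ 2) + p ^ 2 * (2 * E - x ^ 2 - p ^ 2)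
        - 4 * E * (x ^ 2 + p ^ 2) - 2 * x ^ 2 * (x ^ 2 + p ^ 2)) * hkey
    have hC0 : 0 ≤ (x ^ 2 + p ^ 2) * (2 * E - x ^ 2 - σ ^ 2) := mul_nonneg hr.le hpos
    have hca' : (x ^ 2 + p ^ 2) * (2 * x * σ) ≤ (x ^ 2 + p ^ 2) * (2 * E - x ^ 2 - σ ^ 2) :=
      le_of_sq_sub_sq_eq_sq hC0 hdisc
    have hcb' : (x ^ 2 + p ^ 2) * (-(2 * x * σ)) ≤ (x ^ 2 + p ^ 2) * (2 * E - x ^ 2 - σ ^ 2) :=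
      le_of_sq_sub_sq_eq_sq (k := (x ^ 2 + p ^ 2) ^ 2 - 2 * E * x ^ 2) hC0
        (by linear_combination hdisc)
    have hca : 2 * x * σ ≤ 2 * E - x ^ 2 - σ ^ 2 := le_of_mul_le_mul_left hca' hr
    have hcb : -(2 * x * σ) ≤ 2 * E - x ^ 2 - σ ^ 2 := le_of_mul_le_mul_left hcb' hr
    have haa : (x + σ) ^ 2 ≤ 2 * E := by
      have e : (x + σ) ^ 2 = 2 * x * σ + x ^ 2 + σ ^ 2 := by ring
      rw [e]; linarith
    have hbb : (x - σ) ^ 2 ≤ 2 * E := by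
      have e : (x - σ) ^ 2 = -(2 * x * σ) + x ^ 2 + σ ^ 2 := by ring
      rw [e]; linarith
    refine ⟨haa, hbb, ?_⟩
    set A := Real.sqrt (2 * E - (x + σ) ^ 2) with hA_def
    set B := Real.sqrt (2 * E - (x - σ) ^ 2) with hB_def
    have hA0 : 0 ≤ A := Real.sqrt_nonneg _
    have hB0 : 0 ≤ B := Real.sqrt_nonneg _
    have hA2 : A ^ 2 = 2 * E - (x + σ) ^ 2 := Real.sq_sqrt (by linarith)
    have hB2 : B ^ 2 = 2 * E - (x - σ) ^ 2 := Real.sq_sqrt (by linarith)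
    have hABr : A * B * (x ^ 2 + p ^ 2) = (x ^ 2 + p ^ 2) ^ 2 - 2 * E * x ^ 2 := by
      have hsq2 : (A * B * (x ^ 2 + p ^ 2)) ^ 2
          = ((x ^ 2 + p ^ 2) ^ 2 - 2 * E * x ^ 2) ^ 2 := by
        have e : (A * B * (x ^ 2 + p ^ 2)) ^ 2
            = (2 * E - (x + σ) ^ 2) * (2 * E - (x - σ) ^ 2) * (x ^ 2 + p ^ 2) ^ 2 := by
          rw [mul_pow, mul_pow, hA2, hB2]
        rw [e]; linear_combination hdisc
      have hnn : 0 ≤ A * B * (x ^ 2 + p ^ 2) := by positivity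
      have hfac : (A * B * (x ^ 2 + p ^ 2) - ((x ^ 2 + p ^ 2) ^ 2 - 2 * E * x ^ 2))
          * (A * B * (x ^ 2 + p ^ 2) + ((x ^ 2 + p ^ 2) ^ 2 - 2 * E * x ^ 2)) = 0 := by
        linear_combination hsq2
      rcases mul_eq_zero.mp hfac with hf | hf
      · linarith
      · linarith [h2]
    have hsum2 : (A + B) ^ 2 * (x ^ 2 + p ^ 2) = (2 * p) ^ 2 * (x ^ 2 + p ^ 2) := by
      have e : (A + B) ^ 2 = A ^ 2 + 2 * (A * B) + B ^ 2 := by ring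
      rw [e, hA2, hB2]
      linear_combination 2 * hABr - 2 * hkey
    have hsq3 : (A + B) ^ 2 = (2 * p) ^ 2 := mul_right_cancel₀ hr.ne' hsum2
    have hfac2 : (A + B - 2 * p) * (A + B + 2 * p) = 0 := by linear_combination hsq3
    rcases mul_eq_zero.mp hfac2 with hf | hf
    · linarith
    · linarith
end
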